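/- Let a, b, D be real numbers with a ≠ 0 and D > 0, and set c = b²/(4a) + a D². Let I ⊆ ℝ be a nonempty open interval and let Φ : I → ℝ be twice differentiable with Φ''(t) = a·Φ'(t)² + b·Φ'(t) + c for all t ∈ I. Then there exist real constants κ and μ such that for all t ∈ I one has cos(aDt + κ) ≠ 0 and Φ(t) = −(1/a)·log|cos(aDt + κ)| − (b/(2a))·t + μ. -/

import Mathlib

lemma const_on_Ioo {f : ℝ → ℝ} {x y : ℝ}
    (hf : ∀ t ∈ Set.Ioo x y, HasDerivAt f 0 t)
    {s t : ℝ} (hs : s ∈ Set.Ioo x y) (ht : t ∈ Set.Ioo x y) (hst : s < t) :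
    f s = f t := by
  have hsub : Set.Icc s t ⊆ Set.Ioo x y := fun u hu =>
    ⟨lt_of_lt_of_le hs.1 hu.1, lt_of_le_of_lt hu.2 ht.2⟩
  have hcont : ContinuousOn f (Set.Icc s t) := fun u hu =>
    (hf u (hsub hu)).continuousAt.continuousWithinAt
  obtain ⟨ξ, hξ, he⟩ := exists_hasDerivAt_eq_slope f (fun _ => 0) hst hcont
    (fun u hu => hf u (hsub (Set.Ioo_subset_Icc_self hu)))
  have h0 := he.symm
  rw [div_eq_iff (sub_ne_zero.2 hst.ne')] at h0
  linarith

lemma const_on_Ioo' {f : ℝ → ℝ} {x y : ℝ}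
    (hf : ∀ t ∈ Set.Ioo x y, HasDerivAt f 0 t)
    {s t : ℝ} (hs : s ∈ Set.Ioo x y) (ht : t ∈ Set.Ioo x y) : f s = f t := by
  rcases lt_trichotomy s t with h | h | h
  · exact const_on_Ioo hf hs ht h
  · rw [h]
  · exact (const_on_Ioo hf ht hs h).symm

/-- uniqueness for Case 3: any twice differentiable solution of
`Φ'' = aΦ'² + bΦ' + c` (with `c = b²/(4a) + aD²`, `D > 0`) on a nonempty open
interval is of the Case 3 form. -/
theorem stmt_12 (a b D : ℝ) (ha : a ≠ 0) (hD : 0 < D)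
    (c : ℝ) (hc : c = b ^ 2 / (4 * a) + a * D ^ 2)
    (I : Set ℝ) (hI : I.Nonempty) (hIab : ∃ x y : ℝ, I = Set.Ioo x y)
    (Φ : ℝ → ℝ)
    (hΦ₁ : ∀ t ∈ I, DifferentiableAt ℝ Φ t)
    (hΦ₂ : ∀ t ∈ I, DifferentiableAt ℝ (deriv Φ) t)
    (hode : ∀ t ∈ I, deriv (deriv Φ) t = a * (deriv Φ t) ^ 2 + b * deriv Φ t + c) :
    ∃ κ μ : ℝ, ∀ t ∈ I,
      Real.cos (a * D * t + κ) ≠ 0 ∧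
      Φ t = -(1 / a) * Real.log |Real.cos (a * D * t + κ)| - (b / (2 * a)) * t + μ := by
  obtain ⟨x, y, rfl⟩ := hIab
  obtain ⟨t₀, ht₀⟩ := hI
  have hD' : D ≠ 0 := hD.ne'
  set ψ : ℝ → ℝ := deriv Φ with hψdef
  set v : ℝ → ℝ := fun t => (ψ t + b / (2 * a)) / D with hvdef
  -- derivative of v
  have hvd : ∀ t ∈ Set.Ioo x y, HasDerivAt v (a * D * (1 + v t ^ 2)) t := by
    intro t ht
    have h1 : HasDerivAt ψ (deriv ψ t) t := (hΦ₂ t ht).hasDerivAt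
    rw [hode t ht] at h1
    have h2 := (h1.add_const (b / (2 * a))).div_const D
    refine h2.congr_deriv ?_
    simp only [hvdef]
    rw [hc]
    field_simp
    ring
  -- g := arctan ∘ v − aD t is constant
  have hgd : ∀ t ∈ Set.Ioo x y,
      HasDerivAt (fun t => Real.arctan (v t) - a * D * t) 0 t := by
    intro t ht
    have h1 : HasDerivAt (fun t => Real.arctan (v t))
        ((1 / (1 + v t ^ 2)) * (a * D * (1 + v t ^ 2))) t :=
      (Real.hasDerivAt_arctan (v t)).comp t (hvd t ht)
    have h2 : HasDerivAt (fun t : ℝ => a * D * t) (a * D) t := by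
      simpa using (hasDerivAt_id t).const_mul (a * D)
    have h3 := h1.sub h2
    refine h3.congr_deriv ?_
    have hpos : (0:ℝ) < 1 + v t ^ 2 := by positivity
    field_simp
    ring
  set κ : ℝ := Real.arctan (v t₀) - a * D * t₀ with hκdef
  have harc : ∀ t ∈ Set.Ioo x y, Real.arctan (v t) = a * D * t + κ := by
    intro t ht
    have := const_on_Ioo' hgd ht ht₀
    rw [hκdef]
    linarith
  have hcospos : ∀ t ∈ Set.Ioo x y, 0 < Real.cos (a * D * t + κ) := by
    intro t ht
    rw [← harc t ht, Real.cos_arctan]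
    positivity
  have htan : ∀ t ∈ Set.Ioo x y,
      Real.sin (a * D * t + κ) = v t * Real.cos (a * D * t + κ) := by
    intro t ht
    have h1 : Real.tan (a * D * t + κ) = v t := by
      rw [← harc t ht, Real.tan_arctan]
    rw [Real.tan_eq_sin_div_cos] at h1
    field_simp [(hcospos t ht).ne'] at h1
    linarith [h1]
  -- h := Φ + (1/a) log cos(aDt+κ) + (b/(2a)) t is constant
  have hhd : ∀ t ∈ Set.Ioo x y,
      HasDerivAt (fun t => Φ t + (1 / a) * Real.log (Real.cos (a * D * t + κ))
        + (b / (2 * a)) * t) 0 t := by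
    intro t ht
    have hinner : HasDerivAt (fun t : ℝ => a * D * t + κ) (a * D) t := by
      simpa using ((hasDerivAt_id t).const_mul (a * D)).add_const κ
    have hcosd : HasDerivAt (fun t => Real.cos (a * D * t + κ))
        (-Real.sin (a * D * t + κ) * (a * D)) t :=
      ((Real.hasDerivAt_cos (a * D * t + κ)).comp t hinner :)
    have hlogd : HasDerivAt (fun t => Real.log (Real.cos (a * D * t + κ)))
        ((Real.cos (a * D * t + κ))⁻¹ * (-Real.sin (a * D * t + κ) * (a * D))) t :=
      ((Real.hasDerivAt_log (hcospos t ht).ne').comp t hcosd :)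
    have hΦd : HasDerivAt Φ (ψ t) t := (hΦ₁ t ht).hasDerivAt
    have hlin : HasDerivAt (fun t : ℝ => (b / (2 * a)) * t) (b / (2 * a)) t := by
      simpa using (hasDerivAt_id t).const_mul (b / (2 * a))
    have h3 := (hΦd.add (hlogd.const_mul (1 / a))).add hlin
    refine h3.congr_deriv ?_
    rw [htan t ht]
    have hc0 : Real.cos (a * D * t + κ) ≠ 0 := (hcospos t ht).ne'
    have hvt : v t = (ψ t + b / (2 * a)) / D := rfl
    rw [hvt]
    field_simp
    ring
  refine ⟨κ, Φ t₀ + (1 / a) * Real.log (Real.cos (a * D * t₀ + κ))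
    + (b / (2 * a)) * t₀, fun t ht => ?_⟩
  have hcp := hcospos t ht
  refine ⟨hcp.ne', ?_⟩
  have hconst := const_on_Ioo' hhd ht ht₀
  rw [abs_of_pos hcp]
  linarith
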